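/- Let Q be a bounded quasinilpotent operator on a complex Banach space X, and suppose z ∈ T_Q, i.e., D := sup_{j≥0} (j+1)‖zQ(I+zQ)^j‖ < ∞. Then for all s > 0: ‖(I − szQ)^{-1}‖ ≤ D ln(s+1) + 1. -/

import Mathlib

open Filter Topology

private lemma geom_mul_aux {R : Type*} [NormedRing R] [CompleteSpace R] {x : R}
    (hx : Summable fun n : ℕ => x ^ n) :
    (∑' n : ℕ, x ^ n) * (1 - x) = 1 ∧ (1 - x) * ∑' n : ℕ, x ^ n = 1 := by
  have h0 : Tendsto (fun n : ℕ => x ^ n) atTop (𝓝 0) := hx.tendsto_atTop_zero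
  have h1 : Tendsto (fun n : ℕ => 1 - x ^ n) atTop (𝓝 (1 : R)) := by
    simpa using tendsto_const_nhds.sub h0
  constructor
  · refine tendsto_nhds_unique (hx.hasSum.mul_right (1 - x)).tendsto_sum_nat ?_
    convert ← h1 using 2 with n
    rw [← geom_sum_mul_neg, Finset.sum_mul]
  · refine tendsto_nhds_unique (hx.hasSum.mul_left (1 - x)).tendsto_sum_nat ?_
    convert ← h1 using 2 with n
    rw [← mul_neg_geom_sum, Finset.mul_sum]

theorem resolvent_log_growth_from_tauberian
    {X : Type*} [NormedAddCommGroup X] [NormedSpace ℂ X] [CompleteSpace X]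
    (Q : X →L[ℂ] X) (hQ : spectrum ℂ Q = {0}) (z : ℂ) (D : ℝ)
    (hD : ∀ j : ℕ, ((j : ℝ) + 1) * ‖(z • Q) * (1 + z • Q) ^ j‖ ≤ D) :
    ∀ s : ℝ, 0 < s →
      ‖Ring.inverse (1 - ((s : ℂ) * z) • Q)‖ ≤ D * Real.log (s + 1) + 1 := by
  intro s hs
  obtain ⟨A, hA⟩ : ∃ A : X →L[ℂ] X, A = z • Q := ⟨_, rfl⟩
  rw [← hA] at hD
  have hD0 : 0 ≤ D := le_trans (by positivity) (hD 0)
  have hs1 : (0:ℝ) < s + 1 := by linarith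
  obtain ⟨ξr, hξr⟩ : ∃ ξr : ℝ, ξr = s / (s + 1) := ⟨_, rfl⟩
  have hξ0 : 0 ≤ ξr := by rw [hξr]; positivity
  have hξ1 : ξr < 1 := by rw [hξr, div_lt_one hs1]; linarith
  obtain ⟨ξ, hξ⟩ : ∃ ξ : ℂ, ξ = (ξr : ℂ) := ⟨_, rfl⟩
  have hξnorm : ‖ξ‖ = ξr := by
    rw [hξ, Complex.norm_real, Real.norm_eq_abs, abs_of_nonneg hξ0]
  have hAj : ∀ j : ℕ, ‖A * (1 + A) ^ j‖ ≤ D / ((j : ℝ) + 1) := by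
    intro j
    rw [le_div_iff₀ (by positivity), mul_comm]
    exact hD j
  have hAjD : ∀ j : ℕ, ‖A * (1 + A) ^ j‖ ≤ D := by
    intro j
    refine (hAj j).trans ?_
    rw [div_le_iff₀ (by positivity)]
    nlinarith [Nat.cast_nonneg (α := ℝ) j]
  -- growth bound on powers of 1 + A
  have hpow : ∀ n : ℕ, ‖(1 + A) ^ n‖ ≤ 1 + D * n := by
    intro n
    induction n with
    | zero => simpa [ContinuousLinearMap.one_def] using ContinuousLinearMap.norm_id_le
    | succ n ih =>
      have e : (1 + A) ^ (n + 1) = (1 + A) ^ n + A * (1 + A) ^ n := by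
        rw [pow_succ', add_mul, one_mul]
      rw [e]
      calc ‖(1 + A) ^ n + A * (1 + A) ^ n‖ ≤ ‖(1 + A) ^ n‖ + ‖A * (1 + A) ^ n‖ :=
            norm_add_le _ _
        _ ≤ (1 + D * n) + D := add_le_add ih (hAjD n)
        _ = 1 + D * (n + 1 : ℕ) := by push_cast; ring
  obtain ⟨x, hx⟩ : ∃ x : X →L[ℂ] X, x = ξ • (1 + A) := ⟨_, rfl⟩
  have hxn : ∀ n : ℕ, x ^ n = ξ ^ n • (1 + A) ^ n := by
    intro n; rw [hx]; exact smul_pow ξ _ n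
  have hxnorm : ∀ n : ℕ, ‖x ^ n‖ ≤ (1 + D * n) * ξr ^ n := by
    intro n
    rw [hxn n]
    refine (norm_smul_le (ξ ^ n) ((1 + A) ^ n)).trans ?_
    rw [norm_pow, hξnorm]
    calc ξr ^ n * ‖(1 + A) ^ n‖ ≤ ξr ^ n * (1 + D * n) :=
          mul_le_mul_of_nonneg_left (hpow n) (pow_nonneg hξ0 n)
      _ = (1 + D * n) * ξr ^ n := mul_comm _ _
  have hgsum : Summable (fun n : ℕ => (1 + D * n) * ξr ^ n) := by
    have h1 : Summable (fun n : ℕ => ξr ^ n) :=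
      summable_geometric_of_lt_one hξ0 hξ1
    have h2 : Summable (fun n : ℕ => D * ((n : ℝ) ^ 1 * ξr ^ n)) :=
      (summable_pow_mul_geometric_of_norm_lt_one 1
        (by rwa [Real.norm_eq_abs, abs_of_nonneg hξ0])).mul_left D
    refine (h1.add h2).congr fun n => ?_
    push_cast; ring
  have hsum : Summable (fun n : ℕ => x ^ n) :=
    Summable.of_norm_bounded hgsum hxnorm
  obtain ⟨G, hG⟩ : ∃ G : X →L[ℂ] X, G = ∑' n : ℕ, x ^ n := ⟨_, rfl⟩
  obtain ⟨hG1, hG2⟩ := geom_mul_aux hsum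
  rw [← hG] at hG1 hG2
  -- the candidate inverse
  obtain ⟨T, hT⟩ : ∃ T : X →L[ℂ] X, T = ∑' j : ℕ, ξ ^ (j + 1) • (A * (1 + A) ^ j) :=
    ⟨_, rfl⟩
  have hTG : T = (ξ • A) * G := by
    rw [hT, hG, ← hsum.tsum_mul_left (ξ • A)]
    refine tsum_congr fun j => ?_
    rw [hxn j, smul_mul_smul_comm, pow_succ']
  obtain ⟨S, hS⟩ : ∃ S : X →L[ℂ] X, S = 1 + T := ⟨_, rfl⟩
  -- scalar facts
  have hsne : ((s : ℂ) + 1) ≠ 0 := by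
    have h1 : ((s : ℂ) + 1) = ((s + 1 : ℝ) : ℂ) := by push_cast; ring
    rw [h1]
    exact_mod_cast ne_of_gt hs1
  have hscal : ((s : ℂ) + 1) * ξ = (s : ℂ) := by
    rw [hξ, hξr]
    push_cast
    field_simp
  -- factorization
  have hfac : (1 : X →L[ℂ] X) - (s : ℂ) • A = ((s : ℂ) + 1) • (1 - x) := by
    rw [hx, smul_sub, smul_smul, hscal, smul_add, add_smul, one_smul]
    abel
  -- commutation
  have hAx : Commute A x := by
    rw [hx]
    exact (((Commute.one_right A).add_right (Commute.refl A))).smul_right ξ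
  have hcomm : Commute (ξ • A) (1 - x) :=
    (Commute.one_right (ξ • A)).sub_right (hAx.smul_left ξ)
  have honemx : (1 - x) + ξ • A = 1 - ξ • (1 : X →L[ℂ] X) := by
    rw [hx, smul_add]; abel
  have hfin : ((s : ℂ) + 1) • ((1 : X →L[ℂ] X) - ξ • 1) = 1 := by
    rw [smul_sub, smul_smul, hscal,
      show ((s : ℂ) + 1) • (1 : X →L[ℂ] X) - (s : ℂ) • 1 =
        (((s : ℂ) + 1) - s) • (1 : X →L[ℂ] X) from (sub_smul _ _ _).symm]
    simp
  have key1 : S * ((1 : X →L[ℂ] X) - (s : ℂ) • A) = 1 := by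
    rw [hfac, hS, hTG, mul_smul_comm, add_mul, one_mul, mul_assoc, hG1, mul_one,
      honemx, hfin]
  have key2 : ((1 : X →L[ℂ] X) - (s : ℂ) • A) * S = 1 := by
    rw [hfac, hS, hTG, smul_mul_assoc, mul_add, mul_one, ← mul_assoc, ← hcomm.eq,
      mul_assoc, hG2, mul_one, honemx, hfin]
  have hrw : (1 : X →L[ℂ] X) - ((s : ℂ) * z) • Q = 1 - (s : ℂ) • A := by
    rw [hA, smul_smul]
  have hinv : Ring.inverse ((1 : X →L[ℂ] X) - ((s : ℂ) * z) • Q) = S := by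
    rw [hrw]
    exact Ring.inverse_unit ⟨1 - (s : ℂ) • A, S, key2, key1⟩
  rw [hinv]
  -- norm estimate
  have hlog : HasSum (fun n : ℕ => D * (ξr ^ (n + 1) / ((n : ℝ) + 1)))
      (D * Real.log (s + 1)) := by
    have h := (Real.hasSum_pow_div_log_of_abs_lt_one
      (x := ξr) (by rw [abs_of_nonneg hξ0]; exact hξ1)).mul_left D
    rw [show 1 - ξr = (s + 1)⁻¹ by rw [hξr]; field_simp; ring, Real.log_inv, neg_neg] at h
    exact h
  have hTnorm : ‖T‖ ≤ D * Real.log (s + 1) := by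
    rw [hT]
    refine tsum_of_norm_bounded hlog fun j => ?_
    refine (norm_smul_le (ξ ^ (j + 1)) (A * (1 + A) ^ j)).trans ?_
    rw [norm_pow, hξnorm]
    calc ξr ^ (j + 1) * ‖A * (1 + A) ^ j‖ ≤ ξr ^ (j + 1) * (D / ((j : ℝ) + 1)) :=
          mul_le_mul_of_nonneg_left (hAj j) (by positivity)
      _ = D * (ξr ^ (j + 1) / ((j : ℝ) + 1)) := by ring
  calc ‖S‖ = ‖(1 : X →L[ℂ] X) + T‖ := by rw [hS]
    _ ≤ ‖(1 : X →L[ℂ] X)‖ + ‖T‖ := norm_add_le _ _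
    _ ≤ 1 + (D * Real.log (s + 1)) := by
        refine add_le_add ?_ hTnorm
        simpa [ContinuousLinearMap.one_def] using ContinuousLinearMap.norm_id_le
    _ = D * Real.log (s + 1) + 1 := by ring
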